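/- For every integer n ≥ 1, the 5-adic valuation of the n-th Fibonacci number equals the 5-adic valuation of n: ν₅(F_n) = ν₅(n). -/

import Mathlib

open Nat

private lemma cassini (n : ℕ) :
    ((fib (n+1) : ℤ))^2 - (fib (n+1) : ℤ) * (fib n : ℤ) - (fib n : ℤ)^2 = (-1)^n := by
  induction n with
  | zero => simp
  | succ n ih =>
    have h : (fib (n+2) : ℤ) = (fib n : ℤ) + (fib (n+1) : ℤ) := by
      rw [fib_add_two]; push_cast; ring
    rw [h, pow_succ]
    linear_combination (-1 : ℤ) * ih

private lemma fib5_pair (n : ℕ) :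
    (fib (5*n) : ℤ) = 5*(fib n:ℤ)*(fib (n+1):ℤ)^4 - 10*(fib n:ℤ)^2*(fib (n+1):ℤ)^3
      + 20*(fib n:ℤ)^3*(fib (n+1):ℤ)^2 - 15*(fib n:ℤ)^4*(fib (n+1):ℤ) + 5*(fib n:ℤ)^5
    ∧ (fib (5*n+1) : ℤ) = (fib (n+1):ℤ)^5 + 10*(fib n:ℤ)^2*(fib (n+1):ℤ)^3
      - 10*(fib n:ℤ)^3*(fib (n+1):ℤ)^2 + 10*(fib n:ℤ)^4*(fib (n+1):ℤ) - 3*(fib n:ℤ)^5 := by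
  induction n with
  | zero => simp
  | succ n ih =>
    obtain ⟨h1, h2⟩ := ih
    have e1 : 5*(n+1) = 5*n + 4 + 1 := by ring
    have e2 : 5*(n+1) + 1 = 5*n + 5 + 1 := by ring
    have f1 : (fib (5*(n+1)) : ℤ) = 3 * (fib (5*n) : ℤ) + 5 * (fib (5*n+1) : ℤ) := by
      rw [e1, fib_add]; push_cast; norm_num [fib_add_two]; try ring
    have f2 : (fib (5*(n+1)+1) : ℤ) = 5 * (fib (5*n) : ℤ) + 8 * (fib (5*n+1) : ℤ) := by
      rw [e2, fib_add]; push_cast; norm_num [fib_add_two]; try ring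
    have h3 : (fib (n+2) : ℤ) = (fib n : ℤ) + (fib (n+1) : ℤ) := by
      rw [fib_add_two]; push_cast; ring
    constructor
    · rw [f1, h1, h2, h3]; ring
    · rw [f2, h1, h2, h3]; ring

private lemma fib5_key (n : ℕ) :
    (fib (5*n) : ℤ) = (fib n : ℤ) * (25*(fib n:ℤ)^4 + 25*(-1)^n*(fib n:ℤ)^2 + 5) := by
  have h := (fib5_pair n).1
  have hc := cassini n
  set a := (fib n : ℤ); set b := (fib (n+1) : ℤ)
  have hc' : b^2 - b*a - a^2 = (-1)^n := hc
  have hsq : ((-1:ℤ)^n)^2 = 1 := by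
    rcases Nat.even_or_odd n with he | ho
    · rw [he.neg_one_pow]; norm_num
    · rw [ho.neg_one_pow]; norm_num
  calc (fib (5*n) : ℤ) = a * (25*a^4 + 25*(b^2-b*a-a^2)*a^2 + 5*(b^2-b*a-a^2)^2) := by
        rw [h]; ring
    _ = a * (25*a^4 + 25*(-1)^n*a^2 + 5) := by rw [hc', hsq]; ring

private lemma five_dvd_fib_iff (n : ℕ) : 5 ∣ fib n ↔ 5 ∣ n := by
  constructor
  · intro h
    by_contra hnd
    have hg : Nat.Coprime 5 n := (Nat.Prime.coprime_iff_not_dvd (by norm_num)).2 hnd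
    have := fib_gcd 5 n
    rw [hg] at this
    have h5 : (5 : ℕ) ∣ Nat.gcd (fib 5) (fib n) := Nat.dvd_gcd (by norm_num) h
    rw [← this] at h5
    simp at h5
  · intro hd
    have : fib 5 ∣ fib n := fib_dvd 5 n hd
    simpa [show fib 5 = 5 by decide] using this

theorem nu5_fib (n : ℕ) (hn : 1 ≤ n) :
    padicValNat 5 (Nat.fib n) = padicValNat 5 n := by
  induction n using Nat.strong_induction_on with
  | _ n ih =>
  haveI : Fact (Nat.Prime 5) := ⟨by norm_num⟩
  by_cases h5 : 5 ∣ n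
  · obtain ⟨m, rfl⟩ := h5
    have hm : 1 ≤ m := by omega
    have hfm : fib m ≠ 0 := (Nat.fib_pos.2 hm).ne'
    obtain ⟨K, hK⟩ : fib m ∣ fib (5*m) := fib_dvd m (5*m) ⟨5, mul_comm 5 m⟩
    have hKZ : (K : ℤ) = 25*((fib m:ℤ)^4 + (-1)^m*(fib m:ℤ)^2) + 5 := by
      have h1 := fib5_key m
      rw [hK] at h1
      push_cast at h1
      have hfmz : (fib m : ℤ) ≠ 0 := Int.natCast_ne_zero.2 hfm
      have h2 := mul_left_cancel₀ hfmz h1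
      rw [h2]; ring
    have h5K : (5 : ℕ) ∣ K := by
      have : (5 : ℤ) ∣ (K : ℤ) := ⟨5*((fib m:ℤ)^4 + (-1)^m*(fib m:ℤ)^2) + 1, by rw [hKZ]; ring⟩
      exact_mod_cast this
    have h25K : ¬ (25 : ℕ) ∣ K := by
      intro h
      have h' : (25 : ℤ) ∣ (K : ℤ) := Int.natCast_dvd_natCast.2 h
      obtain ⟨c, hc⟩ := h'
      omega
    have hK0 : K ≠ 0 := by
      intro h
      rw [h, mul_zero] at hK
      exact (Nat.fib_pos.2 (by omega : 0 < 5*m)).ne' hK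
    have vK : padicValNat 5 K = 1 := by
      have hp1 : (5:ℕ)^1 ∣ K := by simpa using h5K
      have h1 : 1 ≤ padicValNat 5 K := (padicValNat_dvd_iff_le (p := 5) hK0).1 hp1
      have h2 : ¬ 2 ≤ padicValNat 5 K := by
        intro h
        have : (5:ℕ)^2 ∣ K := (padicValNat_dvd_iff_le (p := 5) hK0).2 h
        exact h25K (by norm_num at this; exact this)
      omega
    have hfib : padicValNat 5 (fib (5*m)) = padicValNat 5 (fib m) + 1 := by
      rw [hK, padicValNat.mul hfm hK0, vK]
    have hnn : padicValNat 5 (5*m) = 1 + padicValNat 5 m := by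
      rw [padicValNat.mul (by norm_num) (by omega), padicValNat.self (by norm_num)]
    rw [hfib, hnn, ih m (by omega) hm]
    omega
  · rw [padicValNat.eq_zero_of_not_dvd (fun h => h5 ((five_dvd_fib_iff n).1 h)),
      padicValNat.eq_zero_of_not_dvd h5]
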